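/- Let D be the explicit digraph described in the context. Then for each i∈{1,2,3}, the set {z_i, y_{i+1}, x_{i+2}} (subscripts taken modulo 3, with representatives in {1,2,3}) is an (s_1,t_1)-separator in D−{s_2,t_2}. -/

import Mathlib

/-- A digraph (given by its arc relation `A`) is loopless. -/
def IsLoopless {V : Type*} (A : V → V → Prop) : Prop :=
  ∀ v, ¬ A v v

/-- `l` is a directed path in the digraph with arc relation `A`, recorded as the
(nonempty, repetition-free) list of its vertices, consecutive ones joined by arcs. -/
def IsDipath {V : Type*} (A : V → V → Prop) (l : List V) : Prop :=
  l ≠ [] ∧ l.Nodup ∧ l.Chain' A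

/-- `l` is a directed `(s,t)`-path. -/
def IsDipathFrom {V : Type*} (A : V → V → Prop) (s t : V) (l : List V) : Prop :=
  IsDipath A l ∧ l.head? = some s ∧ l.getLast? = some t

/-- The digraph `A`, with the vertices of `F` deleted, contains `k` internally
disjoint `(s,t)`-paths. -/
def HasIDPaths {V : Type*} (A : V → V → Prop) (F : Set V) (s t : V) (k : ℕ) : Prop :=
  ∃ P : Fin k → List V,
    (∀ i, IsDipathFrom A s t (P i) ∧ ∀ v ∈ P i, v ∉ F) ∧
    (∀ i j, i ≠ j → ∀ v, v ∈ P i → v ∈ P j → v = s ∨ v = t)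

/-- The digraph `A` is `k`-linked. -/
def IsKLinked {V : Type*} (A : V → V → Prop) (k : ℕ) : Prop :=
  ∀ s t : Fin k → V,
    Function.Injective (Sum.elim s t : Fin k ⊕ Fin k → V) →
    ∃ P : Fin k → List V,
      (∀ i, IsDipathFrom A (s i) (t i) (P i)) ∧
      (∀ i j, i ≠ j → ∀ v, v ∈ P i → v ∉ P j)

/-- The digraph `A` is `k`-strong. -/
def IsKStrong {V : Type*} [Fintype V] (A : V → V → Prop) (k : ℕ) : Prop :=
  k + 1 ≤ Fintype.card V ∧
  ∀ F : Finset V, F.card ≤ k - 1 →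
    ∀ x y : V, x ∉ F → y ∉ F → x ≠ y →
      ∃ l : List V, IsDipathFrom A x y l ∧ ∀ v ∈ l, v ∉ F

/-- `(A, V1, V2)` is a split digraph: the vertex set is the disjoint union of the
nonempty sets `V1` and `V2`, there is no arc between two vertices of `V1`, and the
subdigraph induced by `V2` is semicomplete. -/
def IsSplitDigraph {V : Type*} (A : V → V → Prop) (V1 V2 : Set V) : Prop :=
  V1.Nonempty ∧ V2.Nonempty ∧ Disjoint V1 V2 ∧ V1 ∪ V2 = Set.univ ∧
  (∀ u ∈ V1, ∀ v ∈ V1, ¬ A u v) ∧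
  (∀ u ∈ V2, ∀ v ∈ V2, u ≠ v → A u v ∨ A v u)

/-- The tuple `(A, s1, t1, s2, t2)` is good: there are vertex-disjoint `(s1,t1)`-
and `(s2,t2)`-paths. -/
def IsGood {V : Type*} (A : V → V → Prop) (s1 t1 s2 t2 : V) : Prop :=
  ∃ P1 P2 : List V, IsDipathFrom A s1 t1 P1 ∧ IsDipathFrom A s2 t2 P2 ∧
    ∀ v ∈ P1, v ∉ P2

/-- In the explicit 13-vertex split digraph of Proposition 2 (vertices
s1,t1,s2,t2 together with x 0,x 1,x 2, y 0,y 1,y 2, z 0,z 1,z 2, arcs exactly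
as listed), for each i the set {z i, y (i+1), x (i+2)} (indices mod 3) is an
(s1,t1)-separator in D − {s2,t2}. -/
lemma ne_of_get {α : Type*} {l : List α} (h : l.Nodup) (m n : ℕ)
    (hm : m < l.length) (hn : n < l.length) (hmn : m ≠ n) :
    l.get ⟨m, hm⟩ ≠ l.get ⟨n, hn⟩ :=
  fun he => hmn (congrArg Fin.val (List.nodup_iff_injective_get.mp h he))

lemma chain_closed' {V : Type*} (A : V → V → Prop) (C S : Set V)
    (hC : ∀ u ∈ C, ∀ v, A u v → v ∉ S → v ∈ C) :
    ∀ l : List V, l.Chain' A → (∀ v ∈ l, v ∉ S) →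
      ∀ a, l.head? = some a → a ∈ C → ∀ v ∈ l, v ∈ C := by
  intro l
  induction l with
  | nil => intro _ _ a ha; simp at ha
  | cons a t ih =>
    intro hch hS b hb hbC v hv
    rw [List.head?_cons, Option.some_inj] at hb
    subst hb
    rcases List.mem_cons.mp hv with rfl | hv
    · exact hbC
    · cases t with
      | nil => simp at hv
      | cons c t' =>
        replace hch := List.isChain_cons_cons.mp hch
        have hcC : c ∈ C := hC a hbC c hch.1 (hS c (by simp))
        exact ih hch.2 (fun w hw => hS w (List.mem_cons_of_mem _ hw)) c rfl hcC v hv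

theorem stmt_6 {V : Type*} [Fintype V] [DecidableEq V]
    (A : V → V → Prop) (s1 t1 s2 t2 : V) (x y z : Fin 3 → V)
    (hnodup : ([s1, t1, s2, t2, x 0, x 1, x 2, y 0, y 1, y 2,
                z 0, z 1, z 2] : List V).Nodup)
    (hvert : ∀ v : V, v ∈ ([s1, t1, s2, t2, x 0, x 1, x 2, y 0, y 1, y 2,
                z 0, z 1, z 2] : List V))
    (harc : ∀ u v : V, A u v ↔ (
      (∃ i : Fin 3, u = y i ∧ v = y (i + 1)) ∨
      (u = s1 ∧ v = s2) ∨ (u = t1 ∧ v = s2) ∨ (u = s1 ∧ v = t2) ∨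
      (u = t1 ∧ v = t2) ∨ (u = t1 ∧ v = s1) ∨ (u = t2 ∧ v = s2) ∨
      (u = s1 ∧ ∃ i : Fin 3, v = x i) ∨ ((∃ i : Fin 3, u = z i) ∧ v = t1) ∨
      (u = t1 ∧ ∃ i : Fin 3, v = y i) ∨ ((∃ i : Fin 3, u = y i) ∧ v = s1) ∨
      (∃ i : Fin 3, u = x i ∧ v = y i) ∨ (∃ i : Fin 3, u = y i ∧ v = z i) ∨
      (((∃ i : Fin 3, u = x i) ∨ (∃ i : Fin 3, u = y i)) ∧ v = s2) ∨
      (u = s2 ∧ ∃ i : Fin 3, v = z i) ∨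
      (u = t2 ∧ ((∃ i : Fin 3, v = y i) ∨ (∃ i : Fin 3, v = z i))) ∨
      ((∃ i : Fin 3, u = x i) ∧ v = t2) ∨
      (∃ i : Fin 3, u = z i ∧ v = y (i + 1)) ∨
      (∃ i : Fin 3, u = y (i + 1) ∧ v = x (i + 2)))) :
    ∀ i : Fin 3,
      s1 ∉ ({z i, y (i + 1), x (i + 2)} : Set V) ∧
      t1 ∉ ({z i, y (i + 1), x (i + 2)} : Set V) ∧
      ¬ ∃ l : List V, IsDipathFrom A s1 t1 l ∧
          ∀ v ∈ l, v ∉ ({s2, t2, z i, y (i + 1), x (i + 2)} : Set V) := by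
  have f1 : ∀ a b : Fin 3, a ≠ b + 2 → a = b ∨ a = b + 1 := by decide
  have f2 : ∀ a b : Fin 3, a + 1 = b → a + 2 = b + 1 := by decide
  have hxx : ∀ a b : Fin 3, x a = x b → a = b := by
    intro a b
    fin_cases a <;> fin_cases b
    exacts [fun _ => rfl,
    fun h => absurd h (ne_of_get hnodup 4 5 (by simp) (by simp) (by omega)),
    fun h => absurd h (ne_of_get hnodup 4 6 (by simp) (by simp) (by omega)),
    fun h => absurd h (ne_of_get hnodup 5 4 (by simp) (by simp) (by omega)),
    fun _ => rfl,
    fun h => absurd h (ne_of_get hnodup 5 6 (by simp) (by simp) (by omega)),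
    fun h => absurd h (ne_of_get hnodup 6 4 (by simp) (by simp) (by omega)),
    fun h => absurd h (ne_of_get hnodup 6 5 (by simp) (by simp) (by omega)),
    fun _ => rfl]
  have hyy : ∀ a b : Fin 3, y a = y b → a = b := by
    intro a b
    fin_cases a <;> fin_cases b
    exacts [fun _ => rfl,
    fun h => absurd h (ne_of_get hnodup 7 8 (by simp) (by simp) (by omega)),
    fun h => absurd h (ne_of_get hnodup 7 9 (by simp) (by simp) (by omega)),
    fun h => absurd h (ne_of_get hnodup 8 7 (by simp) (by simp) (by omega)),
    fun _ => rfl,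
    fun h => absurd h (ne_of_get hnodup 8 9 (by simp) (by simp) (by omega)),
    fun h => absurd h (ne_of_get hnodup 9 7 (by simp) (by simp) (by omega)),
    fun h => absurd h (ne_of_get hnodup 9 8 (by simp) (by simp) (by omega)),
    fun _ => rfl]
  have hyx : ∀ a b : Fin 3, y a ≠ x b := by
    intro a b
    fin_cases a <;> fin_cases b
    exacts [ne_of_get hnodup 7 4 (by simp) (by simp) (by omega),
    ne_of_get hnodup 7 5 (by simp) (by simp) (by omega),
    ne_of_get hnodup 7 6 (by simp) (by simp) (by omega),
    ne_of_get hnodup 8 4 (by simp) (by simp) (by omega),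
    ne_of_get hnodup 8 5 (by simp) (by simp) (by omega),
    ne_of_get hnodup 8 6 (by simp) (by simp) (by omega),
    ne_of_get hnodup 9 4 (by simp) (by simp) (by omega),
    ne_of_get hnodup 9 5 (by simp) (by simp) (by omega),
    ne_of_get hnodup 9 6 (by simp) (by simp) (by omega)]
  have hxy : ∀ a b : Fin 3, x a ≠ y b := by
    intro a b
    fin_cases a <;> fin_cases b
    exacts [ne_of_get hnodup 4 7 (by simp) (by simp) (by omega),
    ne_of_get hnodup 4 8 (by simp) (by simp) (by omega),
    ne_of_get hnodup 4 9 (by simp) (by simp) (by omega),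
    ne_of_get hnodup 5 7 (by simp) (by simp) (by omega),
    ne_of_get hnodup 5 8 (by simp) (by simp) (by omega),
    ne_of_get hnodup 5 9 (by simp) (by simp) (by omega),
    ne_of_get hnodup 6 7 (by simp) (by simp) (by omega),
    ne_of_get hnodup 6 8 (by simp) (by simp) (by omega),
    ne_of_get hnodup 6 9 (by simp) (by simp) (by omega)]
  have hzx : ∀ a b : Fin 3, z a ≠ x b := by
    intro a b
    fin_cases a <;> fin_cases b
    exacts [ne_of_get hnodup 10 4 (by simp) (by simp) (by omega),
    ne_of_get hnodup 10 5 (by simp) (by simp) (by omega),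
    ne_of_get hnodup 10 6 (by simp) (by simp) (by omega),
    ne_of_get hnodup 11 4 (by simp) (by simp) (by omega),
    ne_of_get hnodup 11 5 (by simp) (by simp) (by omega),
    ne_of_get hnodup 11 6 (by simp) (by simp) (by omega),
    ne_of_get hnodup 12 4 (by simp) (by simp) (by omega),
    ne_of_get hnodup 12 5 (by simp) (by simp) (by omega),
    ne_of_get hnodup 12 6 (by simp) (by simp) (by omega)]
  have hzy : ∀ a b : Fin 3, z a ≠ y b := by
    intro a b
    fin_cases a <;> fin_cases b
    exacts [ne_of_get hnodup 10 7 (by simp) (by simp) (by omega),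
    ne_of_get hnodup 10 8 (by simp) (by simp) (by omega),
    ne_of_get hnodup 10 9 (by simp) (by simp) (by omega),
    ne_of_get hnodup 11 7 (by simp) (by simp) (by omega),
    ne_of_get hnodup 11 8 (by simp) (by simp) (by omega),
    ne_of_get hnodup 11 9 (by simp) (by simp) (by omega),
    ne_of_get hnodup 12 7 (by simp) (by simp) (by omega),
    ne_of_get hnodup 12 8 (by simp) (by simp) (by omega),
    ne_of_get hnodup 12 9 (by simp) (by simp) (by omega)]
  have hxs1 : ∀ a : Fin 3, x a ≠ s1 := by
    intro a
    fin_cases a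
    exacts [ne_of_get hnodup 4 0 (by simp) (by simp) (by omega),
    ne_of_get hnodup 5 0 (by simp) (by simp) (by omega),
    ne_of_get hnodup 6 0 (by simp) (by simp) (by omega)]
  have hys1 : ∀ a : Fin 3, y a ≠ s1 := by
    intro a
    fin_cases a
    exacts [ne_of_get hnodup 7 0 (by simp) (by simp) (by omega),
    ne_of_get hnodup 8 0 (by simp) (by simp) (by omega),
    ne_of_get hnodup 9 0 (by simp) (by simp) (by omega)]
  have hzs1 : ∀ a : Fin 3, z a ≠ s1 := by
    intro a
    fin_cases a
    exacts [ne_of_get hnodup 10 0 (by simp) (by simp) (by omega),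
    ne_of_get hnodup 11 0 (by simp) (by simp) (by omega),
    ne_of_get hnodup 12 0 (by simp) (by simp) (by omega)]
  have hs1x : ∀ a : Fin 3, s1 ≠ x a := by
    intro a
    fin_cases a
    exacts [ne_of_get hnodup 0 4 (by simp) (by simp) (by omega),
    ne_of_get hnodup 0 5 (by simp) (by simp) (by omega),
    ne_of_get hnodup 0 6 (by simp) (by simp) (by omega)]
  have hs1y : ∀ a : Fin 3, s1 ≠ y a := by
    intro a
    fin_cases a
    exacts [ne_of_get hnodup 0 7 (by simp) (by simp) (by omega),
    ne_of_get hnodup 0 8 (by simp) (by simp) (by omega),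
    ne_of_get hnodup 0 9 (by simp) (by simp) (by omega)]
  have hs1z : ∀ a : Fin 3, s1 ≠ z a := by
    intro a
    fin_cases a
    exacts [ne_of_get hnodup 0 10 (by simp) (by simp) (by omega),
    ne_of_get hnodup 0 11 (by simp) (by simp) (by omega),
    ne_of_get hnodup 0 12 (by simp) (by simp) (by omega)]
  have ht1x : ∀ a : Fin 3, t1 ≠ x a := by
    intro a
    fin_cases a
    exacts [ne_of_get hnodup 1 4 (by simp) (by simp) (by omega),
    ne_of_get hnodup 1 5 (by simp) (by simp) (by omega),
    ne_of_get hnodup 1 6 (by simp) (by simp) (by omega)]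
  have ht1y : ∀ a : Fin 3, t1 ≠ y a := by
    intro a
    fin_cases a
    exacts [ne_of_get hnodup 1 7 (by simp) (by simp) (by omega),
    ne_of_get hnodup 1 8 (by simp) (by simp) (by omega),
    ne_of_get hnodup 1 9 (by simp) (by simp) (by omega)]
  have ht1z : ∀ a : Fin 3, t1 ≠ z a := by
    intro a
    fin_cases a
    exacts [ne_of_get hnodup 1 10 (by simp) (by simp) (by omega),
    ne_of_get hnodup 1 11 (by simp) (by simp) (by omega),
    ne_of_get hnodup 1 12 (by simp) (by simp) (by omega)]
  have hs2x : ∀ a : Fin 3, s2 ≠ x a := by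
    intro a
    fin_cases a
    exacts [ne_of_get hnodup 2 4 (by simp) (by simp) (by omega),
    ne_of_get hnodup 2 5 (by simp) (by simp) (by omega),
    ne_of_get hnodup 2 6 (by simp) (by simp) (by omega)]
  have hs2y : ∀ a : Fin 3, s2 ≠ y a := by
    intro a
    fin_cases a
    exacts [ne_of_get hnodup 2 7 (by simp) (by simp) (by omega),
    ne_of_get hnodup 2 8 (by simp) (by simp) (by omega),
    ne_of_get hnodup 2 9 (by simp) (by simp) (by omega)]
  have ht2x : ∀ a : Fin 3, t2 ≠ x a := by
    intro a
    fin_cases a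
    exacts [ne_of_get hnodup 3 4 (by simp) (by simp) (by omega),
    ne_of_get hnodup 3 5 (by simp) (by simp) (by omega),
    ne_of_get hnodup 3 6 (by simp) (by simp) (by omega)]
  have ht2y : ∀ a : Fin 3, t2 ≠ y a := by
    intro a
    fin_cases a
    exacts [ne_of_get hnodup 3 7 (by simp) (by simp) (by omega),
    ne_of_get hnodup 3 8 (by simp) (by simp) (by omega),
    ne_of_get hnodup 3 9 (by simp) (by simp) (by omega)]
  have ht1s1 : t1 ≠ s1 := ne_of_get hnodup 1 0 (by simp) (by simp) (by omega)
  have hs2s1 : s2 ≠ s1 := ne_of_get hnodup 2 0 (by simp) (by simp) (by omega)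
  have ht2s1 : t2 ≠ s1 := ne_of_get hnodup 3 0 (by simp) (by simp) (by omega)
  intro i
  refine ⟨?_, ?_, ?_⟩
  · simp only [Set.mem_insert_iff, Set.mem_singleton_iff, not_or]
    exact ⟨hs1z i, hs1y (i + 1), hs1x (i + 2)⟩
  · simp only [Set.mem_insert_iff, Set.mem_singleton_iff, not_or]
    exact ⟨ht1z i, ht1y (i + 1), ht1x (i + 2)⟩
  · have hclosed : ∀ u ∈ ({s1, x i, x (i + 1), y i} : Set V), ∀ v, A u v →
        v ∉ ({s2, t2, z i, y (i + 1), x (i + 2)} : Set V) →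
        v ∈ ({s1, x i, x (i + 1), y i} : Set V) := by
      intro u hu v hA hv
      rw [harc] at hA
      simp only [Set.mem_insert_iff, Set.mem_singleton_iff, not_or] at hu hv ⊢
      obtain ⟨hv1, hv2, hv3, hv4, hv5⟩ := hv
      rcases hA with ⟨j, rfl, rfl⟩ | ⟨rfl, rfl⟩ | ⟨rfl, rfl⟩ | ⟨rfl, rfl⟩ | ⟨rfl, rfl⟩ |
        ⟨rfl, rfl⟩ | ⟨rfl, rfl⟩ | ⟨rfl, j, rfl⟩ | ⟨⟨j, rfl⟩, rfl⟩ | ⟨rfl, j, rfl⟩ |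
        ⟨⟨j, rfl⟩, rfl⟩ | ⟨j, rfl, rfl⟩ | ⟨j, rfl, rfl⟩ | ⟨(⟨j, rfl⟩ | ⟨j, rfl⟩), rfl⟩ |
        ⟨rfl, j, rfl⟩ | ⟨rfl, (⟨j, rfl⟩ | ⟨j, rfl⟩)⟩ | ⟨⟨j, rfl⟩, rfl⟩ | ⟨j, rfl, rfl⟩ |
        ⟨j, rfl, rfl⟩
      -- 1: y j → y (j+1)
      · rcases hu with h | h | h | h
        · exact absurd h (hys1 j)
        · exact absurd h (hyx j i)
        · exact absurd h (hyx j (i + 1))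
        · obtain rfl := hyy j i h
          exact absurd rfl hv4
      -- 2: s1 → s2
      · exact absurd rfl hv1
      -- 3: t1 → s2
      · exact absurd rfl hv1
      -- 4: s1 → t2
      · exact absurd rfl hv2
      -- 5: t1 → t2
      · exact absurd rfl hv2
      -- 6: t1 → s1
      · exact Or.inl rfl
      -- 7: t2 → s2
      · exact absurd rfl hv1
      -- 8: s1 → x j
      · have hj : j ≠ i + 2 := fun hh => hv5 (congrArg x hh)
        rcases f1 j i hj with rfl | rfl
        · exact Or.inr (Or.inl rfl)
        · exact Or.inr (Or.inr (Or.inl rfl))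
      -- 9: z j → t1
      · rcases hu with h | h | h | h
        · exact absurd h (hzs1 j)
        · exact absurd h (hzx j i)
        · exact absurd h (hzx j (i + 1))
        · exact absurd h (hzy j i)
      -- 10: t1 → y j
      · rcases hu with h | h | h | h
        · exact absurd h ht1s1
        · exact absurd h (ht1x i)
        · exact absurd h (ht1x (i + 1))
        · exact absurd h (ht1y i)
      -- 11: y j → s1
      · exact Or.inl rfl
      -- 12: x j → y j
      · rcases hu with h | h | h | h
        · exact absurd h (hxs1 j)
        · obtain rfl := hxx j i h
          exact Or.inr (Or.inr (Or.inr rfl))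
        · obtain rfl := hxx j (i + 1) h
          exact absurd rfl hv4
        · exact absurd h (hxy j i)
      -- 13: y j → z j
      · rcases hu with h | h | h | h
        · exact absurd h (hys1 j)
        · exact absurd h (hyx j i)
        · exact absurd h (hyx j (i + 1))
        · obtain rfl := hyy j i h
          exact absurd rfl hv3
      -- 14: x/y → s2
      · exact absurd rfl hv1
      · exact absurd rfl hv1
      -- 15: s2 → z j
      · rcases hu with h | h | h | h
        · exact absurd h hs2s1
        · exact absurd h (hs2x i)
        · exact absurd h (hs2x (i + 1))
        · exact absurd h (hs2y i)
      -- 16: t2 → y j / z j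
      · rcases hu with h | h | h | h
        · exact absurd h ht2s1
        · exact absurd h (ht2x i)
        · exact absurd h (ht2x (i + 1))
        · exact absurd h (ht2y i)
      · rcases hu with h | h | h | h
        · exact absurd h ht2s1
        · exact absurd h (ht2x i)
        · exact absurd h (ht2x (i + 1))
        · exact absurd h (ht2y i)
      -- 17: x j → t2
      · exact absurd rfl hv2
      -- 18: z j → y (j+1)
      · rcases hu with h | h | h | h
        · exact absurd h (hzs1 j)
        · exact absurd h (hzx j i)
        · exact absurd h (hzx j (i + 1))
        · exact absurd h (hzy j i)
      -- 19: y (j+1) → x (j+2)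
      · rcases hu with h | h | h | h
        · exact absurd h (hys1 (j + 1))
        · exact absurd h (hyx (j + 1) i)
        · exact absurd h (hyx (j + 1) (i + 1))
        · have hji : j + 1 = i := hyy (j + 1) i h
          exact Or.inr (Or.inr (Or.inl (congrArg x (f2 j i hji))))
    rintro ⟨l, ⟨⟨⟨hne0, hnd, hch⟩, hhead, hlast⟩, havoid⟩⟩
    have hs1C : s1 ∈ ({s1, x i, x (i + 1), y i} : Set V) := by simp
    have ht1l : t1 ∈ l := by
      have h := List.getLast?_eq_getLast hne0
      rw [hlast] at h
      exact (Option.some_inj.mp h).symm ▸ List.getLast_mem hne0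
    have ht1C := chain_closed' A _ _ hclosed l hch havoid s1 hhead hs1C t1 ht1l
    simp only [Set.mem_insert_iff, Set.mem_singleton_iff] at ht1C
    rcases ht1C with h | h | h | h
    · exact absurd h ht1s1
    · exact absurd h (ht1x i)
    · exact absurd h (ht1x (i + 1))
    · exact absurd h (ht1y i)
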